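/- For a linear system (A,b) with A ∈ ℂ^{n×n} and b ∈ ℂⁿ, the pair (A,b) is controllable (the controllability matrix [b, Ab, …, A^{n−1}b] has rank n) if and only if there is no nonzero vector q ∈ ℂⁿ and scalar λ ∈ ℂ with qᵀA = λqᵀ and qᵀb = 0 (PBH test). -/

import Mathlib

open Matrix Polynomial

lemma pbh_rank_iff_ker (n : ℕ) (M : Matrix (Fin n) (Fin n) ℂ) :
    M.rank = n ↔ ∀ q : Fin n → ℂ, q ᵥ* M = 0 → q = 0 := by
  have h1 : M.rank = n ↔ LinearIndependent ℂ (fun i => M i) := by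
    rw [rank_eq_finrank_span_row, linearIndependent_iff_card_eq_finrank_span]
    simp [Set.finrank, eq_comm]
    rfl
  rw [h1, show (LinearIndependent ℂ fun i => M i) ↔ LinearIndependent ℂ M.row from Iff.rfl,
    linearIndependent_rows_iff_isUnit, ← vecMul_injective_iff_isUnit]
  constructor
  · intro h q hq
    exact h (show q ᵥ* M = 0 ᵥ* M by simp [hq])
  · intro h q₁ q₂ hq
    have hq' : q₁ ᵥ* M = q₂ ᵥ* M := hq
    have h0 : (q₁ - q₂) ᵥ* M = 0 := by rw [sub_vecMul, hq', sub_self]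
    exact sub_eq_zero.mp (h _ h0)

lemma pbh_all_pow (n : ℕ) (A : Matrix (Fin n) (Fin n) ℂ) (b : Fin n → ℂ) (q : Fin n → ℂ)
    (h : ∀ i : Fin n, q ⬝ᵥ ((A ^ (i : ℕ)) *ᵥ b) = 0) (k : ℕ) :
    q ⬝ᵥ ((A ^ k) *ᵥ b) = 0 := by
  rcases Nat.eq_zero_or_pos n with hn | hn
  · subst hn; simp [dotProduct]
  have h' : ∀ i : ℕ, i < n → q ⬝ᵥ ((A ^ i) *ᵥ b) = 0 := fun i hi => h ⟨i, hi⟩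
  rw [Matrix.pow_eq_aeval_mod_charpoly]
  set p : ℂ[X] := (X : ℂ[X]) ^ k %ₘ A.charpoly with hp
  have hdeg : p.natDegree < n := by
    rcases eq_or_ne p 0 with h0 | h0
    · simpa [h0] using hn
    have hlt : p.degree < A.charpoly.degree := degree_modByMonic_lt _ A.charpoly_monic
    have := natDegree_lt_natDegree h0 hlt
    rwa [A.charpoly_natDegree_eq_dim, Fintype.card_fin] at this
  let L : Matrix (Fin n) (Fin n) ℂ →ₗ[ℂ] ℂ :=
    { toFun := fun M => q ⬝ᵥ (M *ᵥ b)
      map_add' := fun M N => by rw [add_mulVec, dotProduct_add]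
      map_smul' := fun c M => by
        rw [smul_mulVec, dotProduct_smul, smul_eq_mul, RingHom.id_apply]
        rfl }
  show L (aeval A p) = 0
  rw [aeval_eq_sum_range, map_sum]
  refine Finset.sum_eq_zero fun i hi => ?_
  have hin : (i : ℕ) < n := lt_of_lt_of_le (Finset.mem_range.mp hi) hdeg
  have : L (p.coeff i • A ^ i) = p.coeff i * (q ⬝ᵥ ((A ^ i) *ᵥ b)) := L.map_smul _ _
  rw [this, h' i hin, mul_zero]

/-- PBH test: the controllability matrix `[b, Ab, …, A^{n-1}b]` has rank `n` iff there is no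
nonzero `q` and scalar `λ` with `qᵀA = λqᵀ` and `qᵀb = 0`. -/
theorem stmt5 (n : ℕ) (A : Matrix (Fin n) (Fin n) ℂ) (b : Fin n → ℂ) :
    (Matrix.of fun i (k : Fin n) => ((A ^ (k : ℕ)) *ᵥ b) i).rank = n ↔
      ∀ (q : Fin n → ℂ) (lam : ℂ), q ᵥ* A = lam • q → q ⬝ᵥ b = 0 → q = 0 := by
  set C : Matrix (Fin n) (Fin n) ℂ :=
    Matrix.of fun i (k : Fin n) => ((A ^ (k : ℕ)) *ᵥ b) i with hC
  have hCcol : ∀ (q : Fin n → ℂ) (k : Fin n), (q ᵥ* C) k = q ⬝ᵥ ((A ^ (k : ℕ)) *ᵥ b) := by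
    intro q k
    simp [hC, vecMul, dotProduct]
  rw [pbh_rank_iff_ker]
  constructor
  · -- rank full → PBH
    intro hker q lam hA hb
    apply hker
    funext k
    have hall : ∀ j : ℕ, q ⬝ᵥ ((A ^ j) *ᵥ b) = 0 := by
      intro j
      induction j with
      | zero => simpa using hb
      | succ m ih =>
        rw [pow_succ', ← Matrix.mulVec_mulVec, Matrix.dotProduct_mulVec, hA,
          smul_dotProduct, ih, smul_zero]
    rw [hCcol, hall]
    rfl
  · -- PBH → rank full
    intro hpbh q hq
    by_contra hq0
    -- q annihilates all A^k b
    have hall : ∀ k : ℕ, q ⬝ᵥ ((A ^ k) *ᵥ b) = 0 := by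
      apply pbh_all_pow
      intro i
      rw [← hCcol, hq]
      rfl
    -- invariant subspace
    let W : Submodule ℂ (Fin n → ℂ) :=
      { carrier := {p | ∀ k : ℕ, p ⬝ᵥ ((A ^ k) *ᵥ b) = 0}
        add_mem' := fun {x y} hx hy k => by rw [add_dotProduct, hx k, hy k, add_zero]
        zero_mem' := fun k => zero_dotProduct _
        smul_mem' := fun c x hx k => by rw [smul_dotProduct, hx k, smul_zero] }
    have hqW : q ∈ W := hall
    have hWnt : Nontrivial W := by
      refine ⟨⟨q, hqW⟩, 0, ?_⟩
      simp [hq0, Subtype.ext_iff]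
    -- the endomorphism p ↦ p ᵥ* A on W
    let f : W →ₗ[ℂ] W :=
      { toFun := fun p =>
          ⟨(p : Fin n → ℂ) ᵥ* A, fun k => by
            rw [← Matrix.dotProduct_mulVec, Matrix.mulVec_mulVec, ← pow_succ']
            exact p.2 (k + 1)⟩
        map_add' := fun x y => by
          ext
          simp [add_vecMul]
        map_smul' := fun c x => by
          ext
          simp [Matrix.smul_vecMul] }
    obtain ⟨μ, hμ⟩ := Module.End.exists_eigenvalue f
    obtain ⟨v, hv⟩ := hμ.exists_hasEigenvector
    have hfv : f v = μ • v := hv.apply_eq_smul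
    have heig : (v : Fin n → ℂ) ᵥ* A = μ • (v : Fin n → ℂ) :=
      congr_arg Subtype.val hfv
    have hvb : (v : Fin n → ℂ) ⬝ᵥ b = 0 := by
      have := v.2 0
      simpa using this
    have : (v : Fin n → ℂ) = 0 := hpbh _ μ heig hvb
    exact hv.2 (Subtype.coe_injective this)
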